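/- If the multiplication matrices A_1, ..., A_n commute and some A_i has #I distinct eigenvalues, then the solutions of the system x^α = Σ_{β∈I} a_{α,β} x^β (α ∈ J) are determined by the eigenvalues of A_i alone: the system has exactly #I distinct solutions, their i-th coordinates are precisely the eigenvalues of A_i, and each solution is recovered from the corresponding (unique up to scale) eigenvector of A_i. -/

import Mathlib

open Finset Matrix

/-- Total degree of a multi-index. -/
def mdeg {n : ℕ} (α : Fin n → ℕ) : ℕ := ∑ i, α i

/-- The set `I = {α ∈ ℤ₊ⁿ : |α| ≤ m}` of multi-indices of total degree at most `m`. -/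
def Idx (n m : ℕ) : Finset (Fin n → ℕ) :=
  (Fintype.piFinset fun _ => Finset.range (m + 1)).filter fun α => mdeg α ≤ m

/-- `I` is a lower set of multi-indices. -/
def IsLower {n : ℕ} (I : Finset (Fin n → ℕ)) : Prop :=
  ∀ β ∈ I, ∀ γ : Fin n → ℕ, (∀ i, γ i ≤ β i) → γ ∈ I

/-- `α` belongs to the border `J` of the lower set `I`. -/
def InBorder {n : ℕ} (I : Finset (Fin n → ℕ)) (α : Fin n → ℕ) : Prop :=
  α ∉ I ∧ ∃ β ∈ I, ∃ i : Fin n, α = β + Pi.single i 1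

/-- The multiplication matrix `A_i`: its row indexed by `β ∈ I` is the standard basis
vector at `β + e_i` if `β + e_i ∈ I`, and is `(a_{β+e_i,γ})_{γ∈I}` otherwise. -/
def multMat {K : Type*} [Field K] {n : ℕ} (I : Finset (Fin n → ℕ))
    (a : (Fin n → ℕ) → (Fin n → ℕ) → K) (i : Fin n) : Matrix ↥I ↥I K :=
  fun β γ =>
    if (β : Fin n → ℕ) + Pi.single i 1 ∈ I then
      (if (γ : Fin n → ℕ) = (β : Fin n → ℕ) + Pi.single i 1 then 1 else 0)
    else a ((β : Fin n → ℕ) + Pi.single i 1) γ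

/-- The monomial vector `v(x) = (x^β)_{β ∈ I}`. -/
def monVec {K : Type*} [Field K] {n : ℕ} (I : Finset (Fin n → ℕ)) (x : Fin n → K) :
    ↥I → K :=
  fun β => ∏ i, x i ^ (β : Fin n → ℕ) i

/-- `x` is a solution of the system (1): `x^α = Σ_{β∈I} a_{α,β} x^β` for all `|α| = m+1`. -/
def IsSol {K : Type*} [Field K] {n : ℕ} (m : ℕ)
    (a : (Fin n → ℕ) → (Fin n → ℕ) → K) (x : Fin n → K) : Prop :=
  ∀ α : Fin n → ℕ, mdeg α = m + 1 →
    ∏ i, x i ^ α i = ∑ β ∈ Idx n m, a α β * ∏ i, x i ^ β i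

/-- `x` is a solution of the system for a general lower set `I` with border `J`. -/
def IsSolB {K : Type*} [Field K] {n : ℕ} (I : Finset (Fin n → ℕ))
    (a : (Fin n → ℕ) → (Fin n → ℕ) → K) (x : Fin n → K) : Prop :=
  ∀ α : Fin n → ℕ, InBorder I α →
    ∏ i, x i ^ α i = ∑ β ∈ I, a α β * ∏ i, x i ^ β i

/-- A square matrix is diagonalizable (semisimple). -/
def Diagonalizable {K : Type*} [Field K] {ι : Type*} [Fintype ι] [DecidableEq ι]
    (A : Matrix ι ι K) : Prop :=
  ∃ P : Matrix ι ι K, IsUnit P.det ∧ (P⁻¹ * A * P).IsDiag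

/-- The polynomial `P_α = x^α − Σ_{β∈I} a_{α,β} x^β`. -/
noncomputable def Pb {K : Type*} [Field K] {n : ℕ} (I : Finset (Fin n → ℕ))
    (a : (Fin n → ℕ) → (Fin n → ℕ) → K) (α : Fin n → ℕ) : MvPolynomial (Fin n) K :=
  MvPolynomial.monomial (Finsupp.equivFunOnFinite.symm α) 1 -
    ∑ β ∈ I, MvPolynomial.C (a α β) * MvPolynomial.monomial (Finsupp.equivFunOnFinite.symm β) 1

/-- The ideal generated by the polynomials `P_α`, `α ∈ J`. -/
noncomputable def PIdeal {K : Type*} [Field K] {n : ℕ} (I : Finset (Fin n → ℕ))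
    (a : (Fin n → ℕ) → (Fin n → ℕ) → K) : Ideal (MvPolynomial (Fin n) K) :=
  Ideal.span {p | ∃ α : Fin n → ℕ, InBorder I α ∧ p = Pb I a α}

section Aux

variable {K : Type*} [Field K] {n m : ℕ}

lemma mdeg_zero : mdeg (0 : Fin n → ℕ) = 0 := by simp [mdeg]

lemma mdeg_add (β γ : Fin n → ℕ) : mdeg (β + γ) = mdeg β + mdeg γ := by
  simp [mdeg, Finset.sum_add_distrib]

lemma mdeg_single (i : Fin n) : mdeg (Pi.single i 1) = 1 := by
  simp [mdeg]

lemma mem_Idx {β : Fin n → ℕ} : β ∈ Idx n m ↔ mdeg β ≤ m := by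
  constructor
  · intro h; exact (Finset.mem_filter.mp h).2
  · intro h
    refine Finset.mem_filter.mpr ⟨?_, h⟩
    refine Fintype.mem_piFinset.mpr fun i => Finset.mem_range.mpr ?_
    have : β i ≤ mdeg β := Finset.single_le_sum (f := β) (fun j _ => Nat.zero_le _) (Finset.mem_univ i)
    omega

lemma zero_mem_Idx : (0 : Fin n → ℕ) ∈ Idx n m := mem_Idx.mpr (by simp [mdeg_zero])

lemma decomp {β : Fin n → ℕ} (h : β ≠ 0) :
    ∃ (γ : Fin n → ℕ) (i : Fin n), γ + Pi.single i 1 = β ∧ mdeg γ + 1 = mdeg β := by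
  have : ∃ i, β i ≠ 0 := by
    by_contra hc
    push_neg at hc
    exact h (funext fun i => hc i)
  obtain ⟨i, hi⟩ := this
  refine ⟨β - Pi.single i 1, i, ?_, ?_⟩
  · funext k
    by_cases hk : k = i
    · subst hk
      simp only [Pi.add_apply, Pi.sub_apply, Pi.single_eq_same]
      omega
    · simp [Pi.single_eq_of_ne hk]
  · have h2 : mdeg (β - Pi.single i 1 + Pi.single i 1) = mdeg (β - Pi.single i 1) + 1 := by
      rw [mdeg_add, mdeg_single]
    rw [← h2]
    congr 1
    funext k
    by_cases hk : k = i
    · subst hk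
      simp only [Pi.add_apply, Pi.sub_apply, Pi.single_eq_same]
      omega
    · simp [Pi.single_eq_of_ne hk]

lemma prod_pow_single' (z : Fin n → K) (i : Fin n) :
    ∏ k, z k ^ (Pi.single i 1 : Fin n → ℕ) k = z i := by
  rw [Finset.prod_eq_single i]
  · simp
  · intro k _ hk; simp [Pi.single_eq_of_ne hk]
  · simp

lemma prod_pow_single (z : Fin n → K) (β : Fin n → ℕ) (i : Fin n) :
    ∏ k, z k ^ ((β + Pi.single i 1 : Fin n → ℕ)) k = z i * ∏ k, z k ^ β k := by
  have : ∀ k, z k ^ ((β + Pi.single i 1 : Fin n → ℕ)) k = z k ^ β k * z k ^ (Pi.single i 1 : Fin n → ℕ) k := by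
    intro k; rw [← pow_add]; rfl
  rw [Finset.prod_congr rfl fun k _ => this k, Finset.prod_mul_distrib, prod_pow_single']
  ring

variable (a : (Fin n → ℕ) → (Fin n → ℕ) → K)

lemma mulVec_of_mem (i : Fin n) (w : ↥(Idx n m) → K) (β : ↥(Idx n m))
    (h : (β : Fin n → ℕ) + Pi.single i 1 ∈ Idx n m) :
    (multMat (Idx n m) a i *ᵥ w) β = w ⟨(β : Fin n → ℕ) + Pi.single i 1, h⟩ := by
  have hiff : ∀ γ : ↥(Idx n m), ((γ : Fin n → ℕ) = (β : Fin n → ℕ) + Pi.single i 1) ↔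
      γ = ⟨(β : Fin n → ℕ) + Pi.single i 1, h⟩ := fun γ => by simp [Subtype.ext_iff]
  simp only [mulVec, dotProduct, multMat, if_pos h, hiff, ite_mul, one_mul, zero_mul]
  simp

lemma mulVec_of_not_mem (i : Fin n) (w : ↥(Idx n m) → K) (β : ↥(Idx n m))
    (h : (β : Fin n → ℕ) + Pi.single i 1 ∉ Idx n m) :
    (multMat (Idx n m) a i *ᵥ w) β
      = ∑ γ : ↥(Idx n m), a ((β : Fin n → ℕ) + Pi.single i 1) (γ : Fin n → ℕ) * w γ := by
  simp only [mulVec, dotProduct, multMat, if_neg h]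

end Aux

/-- If the multiplication matrices commute and some `A_{i₀}` has `#I` distinct
eigenvalues, then the system has exactly `#I` distinct solutions, their `i₀`-th
coordinates are the eigenvalues of `A_{i₀}`, and each solution is recovered from the
corresponding (unique up to scale) eigenvector of `A_{i₀}`. -/
theorem stmt_12 {K : Type*} [Field K] [IsAlgClosed K] {n m : ℕ}
    (a : (Fin n → ℕ) → (Fin n → ℕ) → K)
    (hcomm : ∀ i j, multMat (Idx n m) a i * multMat (Idx n m) a j
        = multMat (Idx n m) a j * multMat (Idx n m) a i)
    (i₀ : Fin n) (μ : ↥(Idx n m) → K) (hμ : Function.Injective μ)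
    (heig : ∀ j, ∃ v : ↥(Idx n m) → K, v ≠ 0 ∧ multMat (Idx n m) a i₀ *ᵥ v = μ j • v) :
    ∃ x : ↥(Idx n m) → (Fin n → K),
      Function.Injective x ∧ (∀ j, IsSol m a (x j)) ∧
      (∀ y : Fin n → K, IsSol m a y → ∃ j, y = x j) ∧
      (∀ j, x j i₀ = μ j) ∧
      ∀ (j : ↥(Idx n m)) (v : ↥(Idx n m) → K), v ≠ 0 →
        multMat (Idx n m) a i₀ *ᵥ v = μ j • v →
        ∃ c : K, c ≠ 0 ∧ v = c • monVec (Idx n m) (x j) := by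
  classical
  set A : Fin n → Matrix ↥(Idx n m) ↥(Idx n m) K := fun i => multMat (Idx n m) a i with hAdef
  choose v hv0 hvA using heig
  have hne : Nonempty ↥(Idx n m) := ⟨⟨0, zero_mem_Idx⟩⟩
  -- basis of eigenvectors
  have hli : LinearIndependent K v := by
    apply Module.End.eigenvectors_linearIndependent' ((A i₀).mulVecLin) μ hμ v
    intro j
    refine Module.End.hasEigenvector_iff.mpr ⟨Module.End.mem_eigenspace_iff.mpr ?_, hv0 j⟩
    simpa using hvA j
  have hcard : Fintype.card ↥(Idx n m) = Module.finrank K (↥(Idx n m) → K) := by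
    simp
  let b : Module.Basis ↥(Idx n m) K (↥(Idx n m) → K) := basisOfLinearIndependentOfCardEqFinrank hli hcard
  have hb : ∀ j, b j = v j := fun j =>
    congrFun (coe_basisOfLinearIndependentOfCardEqFinrank hli hcard) j
  -- key lemma: eigen-equation forces membership in a single eigenline
  have key : ∀ (w : ↥(Idx n m) → K) (t : K), A i₀ *ᵥ w = t • w → w ≠ 0 →
      ∃ (k : ↥(Idx n m)) (c : K), c ≠ 0 ∧ t = μ k ∧ w = c • v k := by
    intro w t hw hw0
    have hrepr : ∀ k, μ k * b.repr w k = t * b.repr w k := by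
      intro k
      have h1 : A i₀ *ᵥ w = ∑ l, (b.repr w l * μ l) • b l := by
        conv_lhs => rw [← b.sum_repr w]
        rw [← (A i₀).mulVecLin_apply, map_sum]
        refine Finset.sum_congr rfl fun l _ => ?_
        rw [LinearMap.map_smul, mulVecLin_apply, hb, hvA, smul_smul]
      have h2 := congrFun (b.repr_sum_self fun l => b.repr w l * μ l)
      rw [← h1, hw] at h2
      have h3 := h2 k
      rw [_root_.map_smul] at h3
      simp only [Finsupp.coe_smul, Pi.smul_apply, smul_eq_mul] at h3
      linear_combination -h3
    have hex : ∃ k, b.repr w k ≠ 0 := by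
      by_contra hc
      push_neg at hc
      apply hw0
      have := b.sum_repr w
      rw [Finset.sum_congr rfl fun l _ => by rw [hc l, zero_smul]] at this
      simpa using this.symm
    obtain ⟨k, hk⟩ := hex
    have ht : t = μ k := by
      have := hrepr k
      exact (mul_right_cancel₀ hk this).symm
    refine ⟨k, b.repr w k, hk, ht, ?_⟩
    have := (b.sum_repr w).symm
    rw [Finset.sum_eq_single k] at this
    · rw [hb] at this; exact this
    · intro l _ hl
      have h4 := hrepr l
      have h5 : μ l ≠ t := fun hc => hl (hμ (hc.trans ht))
      have : b.repr w l = 0 := by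
        by_contra hc
        exact h5 (mul_right_cancel₀ hc h4)
      rw [this, zero_smul]
    · intro h
      exact absurd (Finset.mem_univ k) h
  -- span lemma
  have span : ∀ (j : ↥(Idx n m)) (w : ↥(Idx n m) → K), A i₀ *ᵥ w = μ j • w →
      ∃ c : K, w = c • v j := by
    intro j w hw
    by_cases h0 : w = 0
    · exact ⟨0, by simp [h0]⟩
    · obtain ⟨k, c, hc, ht, hwc⟩ := key w (μ j) hw h0
      have : j = k := hμ ht
      exact ⟨c, by rw [hwc, this]⟩
  -- simultaneous eigenvalues
  have hAcomm : ∀ (i : Fin n) (j : ↥(Idx n m)), A i₀ *ᵥ (A i *ᵥ v j) = μ j • (A i *ᵥ v j) := by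
    intro i j
    rw [mulVec_mulVec, ← hcomm, ← mulVec_mulVec, hvA, mulVec_smul]
  choose lam hlam using fun i j => span j (A i *ᵥ v j) (hAcomm i j)
  set x : ↥(Idx n m) → Fin n → K := fun j i => lam i j with hxdef
  have hx : ∀ (j : ↥(Idx n m)) (i : Fin n), A i *ᵥ v j = x j i • v j := fun j i => hlam i j
  -- recursion
  have hrec : ∀ (j : ↥(Idx n m)) (β : Fin n → ℕ) (hβ : β ∈ Idx n m) (i : Fin n)
      (h2 : β + Pi.single i 1 ∈ Idx n m),
      v j ⟨β + Pi.single i 1, h2⟩ = x j i * v j ⟨β, hβ⟩ := by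
    intro j β hβ i h2
    have h := congrFun (hx j i) ⟨β, hβ⟩
    rw [mulVec_of_mem a i (v j) ⟨β, hβ⟩ h2] at h
    simpa using h
  -- monomial structure of eigenvectors
  have hmon : ∀ (j : ↥(Idx n m)) (β : Fin n → ℕ) (hβ : β ∈ Idx n m),
      v j ⟨β, hβ⟩ = (∏ i, x j i ^ β i) * v j ⟨0, zero_mem_Idx⟩ := by
    intro j
    suffices H : ∀ d (β : Fin n → ℕ) (hβ : β ∈ Idx n m), mdeg β = d →
        v j ⟨β, hβ⟩ = (∏ i, x j i ^ β i) * v j ⟨0, zero_mem_Idx⟩ from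
      fun β hβ => H (mdeg β) β hβ rfl
    intro d
    induction d using Nat.strong_induction_on with
    | _ d ih =>
      intro β hβ hd
      by_cases h0 : β = 0
      · subst h0; simp
      · obtain ⟨γ, i, hγβ, hmd⟩ := decomp h0
        subst hγβ
        have hγ : γ ∈ Idx n m := by
          rw [mem_Idx] at hβ ⊢
          omega
        rw [hrec j γ hγ i hβ, ih (mdeg γ) (by omega) γ hγ rfl, prod_pow_single]
        ring
  have hv00 : ∀ j, v j ⟨0, zero_mem_Idx⟩ ≠ 0 := by
    intro j h
    apply hv0 j
    funext β
    have h1 := hmon j ↑β β.2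
    rw [h, mul_zero] at h1
    simpa using h1
  have hvm : ∀ j, v j = v j ⟨0, zero_mem_Idx⟩ • monVec (Idx n m) (x j) := by
    intro j
    funext β
    have h1 := hmon j ↑β β.2
    simp only [Pi.smul_apply, smul_eq_mul, monVec]
    rw [mul_comm]
    simpa using h1
  -- monVec (x j) is an eigenvector of every A i
  have hmx : ∀ (j : ↥(Idx n m)) (i : Fin n),
      A i *ᵥ monVec (Idx n m) (x j) = x j i • monVec (Idx n m) (x j) := by
    intro j i
    have h1 := hx j i
    rw [hvm j, mulVec_smul] at h1
    have h2 : v j ⟨0, zero_mem_Idx⟩ • (A i *ᵥ monVec (Idx n m) (x j))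
        = v j ⟨0, zero_mem_Idx⟩ • (x j i • monVec (Idx n m) (x j)) := by
      rw [h1]
      exact smul_comm _ _ _
    exact smul_right_injective (↥(Idx n m) → K) (hv00 j) h2
  -- solutions from eigen-equations
  have hsol : ∀ (y : Fin n → K),
      (∀ i, A i *ᵥ monVec (Idx n m) y = y i • monVec (Idx n m) y) → IsSol m a y := by
    intro y hy α hα
    have hα0 : α ≠ 0 := by
      intro h; subst h; rw [mdeg_zero] at hα; omega
    obtain ⟨β, i, hβα, hmd⟩ := decomp hα0
    subst hβα
    have hβ : β ∈ Idx n m := mem_Idx.mpr (by omega)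
    have hnot : β + Pi.single i 1 ∉ Idx n m := by
      rw [mem_Idx]; omega
    have h1 := congrFun (hy i) ⟨β, hβ⟩
    rw [mulVec_of_not_mem a i _ ⟨β, hβ⟩ hnot] at h1
    simp only [Pi.smul_apply, smul_eq_mul] at h1
    calc ∏ k, y k ^ ((β + Pi.single i 1 : Fin n → ℕ)) k
        = y i * ∏ k, y k ^ β k := prod_pow_single y β i
      _ = y i * monVec (Idx n m) y ⟨β, hβ⟩ := rfl
      _ = ∑ γ : ↥(Idx n m), a (β + Pi.single i 1) (γ : Fin n → ℕ) * monVec (Idx n m) y γ :=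
          h1.symm
      _ = ∑ γ ∈ Idx n m, a (β + Pi.single i 1) γ * ∏ k, y k ^ γ k :=
          Finset.sum_coe_sort (Idx n m) fun γ => a (β + Pi.single i 1) γ * ∏ k, y k ^ γ k
  -- eigen-equations from solutions
  have heq : ∀ (y : Fin n → K), IsSol m a y →
      ∀ i, A i *ᵥ monVec (Idx n m) y = y i • monVec (Idx n m) y := by
    intro y hy i
    funext β
    by_cases h2 : (β : Fin n → ℕ) + Pi.single i 1 ∈ Idx n m
    · rw [mulVec_of_mem a i _ β h2]
      simp only [Pi.smul_apply, smul_eq_mul, monVec]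
      rw [prod_pow_single]
    · rw [mulVec_of_not_mem a i _ β h2]
      have hmd : mdeg ((β : Fin n → ℕ) + Pi.single i 1) = m + 1 := by
        have hb1 := mem_Idx.mp β.2
        have hb2 : ¬ mdeg ((β : Fin n → ℕ) + Pi.single i 1) ≤ m := fun h => h2 (mem_Idx.mpr h)
        rw [mdeg_add, mdeg_single] at *
        omega
      have h3 := hy _ hmd
      rw [prod_pow_single] at h3
      show (∑ γ : ↥(Idx n m), a ((β : Fin n → ℕ) + Pi.single i 1) (γ : Fin n → ℕ)
          * monVec (Idx n m) y γ) = (y i • monVec (Idx n m) y) β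
      calc (∑ γ : ↥(Idx n m), a ((β : Fin n → ℕ) + Pi.single i 1) (γ : Fin n → ℕ)
              * monVec (Idx n m) y γ)
          = ∑ γ ∈ Idx n m, a ((β : Fin n → ℕ) + Pi.single i 1) γ * ∏ k, y k ^ γ k :=
            Finset.sum_coe_sort (Idx n m) fun γ =>
              a ((β : Fin n → ℕ) + Pi.single i 1) γ * ∏ k, y k ^ γ k
        _ = y i * ∏ k, y k ^ (β : Fin n → ℕ) k := h3.symm
        _ = (y i • monVec (Idx n m) y) β := rfl
  have hxi₀ : ∀ j, x j i₀ = μ j := by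
    intro j
    have h1 := hx j i₀
    rw [hvA j] at h1
    obtain ⟨β, hβ⟩ := Function.ne_iff.mp (hv0 j)
    have h2 := congrFun h1 β
    simp only [Pi.smul_apply, smul_eq_mul] at h2
    exact (mul_right_cancel₀ hβ h2.symm)
  refine ⟨x, ?_, fun j => hsol (x j) (hmx j), ?_, hxi₀, ?_⟩
  · intro j k h
    apply hμ
    rw [← hxi₀ j, ← hxi₀ k, h]
  · -- completeness
    intro y hy
    have h1 := heq y hy i₀
    have hmv0 : monVec (Idx n m) y ≠ 0 := by
      intro h
      have := congrFun h ⟨0, zero_mem_Idx⟩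
      simp [monVec] at this
    obtain ⟨k, c, hc, ht, hwc⟩ := key _ _ h1 hmv0
    refine ⟨k, ?_⟩
    rw [hvm k, smul_smul] at hwc
    have h0 := congrFun hwc ⟨0, zero_mem_Idx⟩
    simp [monVec] at h0
    have hmm : monVec (Idx n m) y = monVec (Idx n m) (x k) := by
      rw [hwc, ← h0, one_smul]
    funext i
    by_cases hei : (Pi.single i 1 : Fin n → ℕ) ∈ Idx n m
    · have h4 := congrFun hmm ⟨Pi.single i 1, hei⟩
      simpa [monVec, prod_pow_single'] using h4
    · have hm0 : mdeg (Pi.single i 1 : Fin n → ℕ) = m + 1 := by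
        have : ¬ mdeg (Pi.single i 1 : Fin n → ℕ) ≤ m := fun h => hei (mem_Idx.mpr h)
        rw [mdeg_single] at *
        omega
      have hy1 := hy _ hm0
      have hx1 := hsol (x k) (hmx k) _ hm0
      rw [prod_pow_single'] at hy1 hx1
      rw [hy1, hx1]
      refine Finset.sum_congr rfl fun β hβ => ?_
      congr 1
      exact congrFun hmm ⟨β, hβ⟩
  · -- eigenvector uniqueness
    intro j w hw0 hweig
    obtain ⟨k, c, hc, ht, hwc⟩ := key w (μ j) hweig hw0
    have hjk : j = k := hμ ht
    subst hjk
    rw [hvm j, smul_smul] at hwc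
    exact ⟨c * v j ⟨0, zero_mem_Idx⟩, mul_ne_zero hc (hv00 j), hwc⟩
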